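/- Let 0 < q < 1, let Π̃ be the infinite Mallows(q) process built from an i.i.d. Geometric(1-q) sequence (Z_i)_{i≥1}, and let Π_n be the induced permutation of {1,...,n}. Then Π_n is distributed according to the Mallows(q) measure on S_n: for every permutation π of {1,...,n}, P(Π_n = π) = q^{inv(π)}/Z_{n,q}. -/

import Mathlib

open MeasureTheory

noncomputable section

/-- The infinite Mallows insertion process built from a sequence `z` of positive
integers (indexed from 1; the value at index 0 is junk): `insertProc z i` is the
`z i`-th smallest element of `{1,2,...} \ {insertProc z 1, ..., insertProc z (i-1)}`. -/
noncomputable def insertProc (z : ℕ → ℕ) (i : ℕ) : ℕ :=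
  if i = 0 then 0
  else Nat.nth (fun m => 1 ≤ m ∧ ∀ j, j < i → insertProc z j ≠ m) (z i - 1)
termination_by i

/-- Number of inversions of a permutation of `Fin n` (viewing `Fin n` as `{1,...,n}`). -/
def invCount {n : ℕ} (π : Equiv.Perm (Fin n)) : ℕ :=
  (Finset.univ.filter fun p : Fin n × Fin n => p.1 < p.2 ∧ π p.2 < π p.1).card

/-- The Mallows normalizing constant `Z_{n,q} = ∑_π q^{inv(π)}`. -/
def mallowsZ (n : ℕ) (q : ℝ) : ℝ := ∑ π : Equiv.Perm (Fin n), q ^ invCount π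

namespace Mallows

def freeP (z : ℕ → ℕ) (i : ℕ) : ℕ → Prop :=
  fun m => 1 ≤ m ∧ ∀ j, j < i → insertProc z j ≠ m

lemma insertProc_zero (z : ℕ → ℕ) : insertProc z 0 = 0 := by rw [insertProc]; simp

lemma insertProc_eq (z : ℕ → ℕ) {i : ℕ} (hi : i ≠ 0) :
    insertProc z i = Nat.nth (freeP z i) (z i - 1) := by
  rw [insertProc, if_neg hi]; rfl

lemma freeP_infinite (z : ℕ → ℕ) (i : ℕ) : (setOf (freeP z i)).Infinite := by
  have h : (setOf (freeP z i))ᶜ ⊆ insert 0 ((fun j => insertProc z j) '' Set.Iio i) := by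
    intro m hm
    change ¬ freeP z i m at hm
    simp only [freeP, not_and_or, not_forall, _root_.not_imp, ne_eq, not_not] at hm
    rcases hm with h1 | h2
    · left; omega
    · right
      obtain ⟨j, hj, hj2⟩ := h2
      exact ⟨j, hj, by simpa using hj2⟩
  have hfin : (setOf (freeP z i))ᶜ.Finite :=
    Set.Finite.subset (Set.Finite.insert 0 ((Set.finite_Iio i).image _)) h
  simpa using hfin.infinite_compl

lemma insertProc_mem (z : ℕ → ℕ) {i : ℕ} (hi : i ≠ 0) : freeP z i (insertProc z i) := by
  rw [insertProc_eq z hi]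
  exact Nat.nth_mem_of_infinite (freeP_infinite z i) _

lemma one_le_insertProc (z : ℕ → ℕ) {i : ℕ} (hi : i ≠ 0) : 1 ≤ insertProc z i :=
  (insertProc_mem z hi).1

lemma insertProc_ne (z : ℕ → ℕ) {i j : ℕ} (hj : j < i) : insertProc z j ≠ insertProc z i := by
  have hi : i ≠ 0 := by omega
  exact (insertProc_mem z hi).2 j hj

lemma insertProc_ne' (z : ℕ → ℕ) {i j : ℕ} (hij : i ≠ j) (hi : i ≠ 0) (hj : j ≠ 0) :
    insertProc z i ≠ insertProc z j := by
  rcases lt_or_gt_of_ne hij with h | h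
  · exact insertProc_ne z h
  · exact (insertProc_ne z h).symm

lemma insertProc_congr {z z' : ℕ → ℕ} {i : ℕ} (h : ∀ j, 1 ≤ j → j ≤ i → z j = z' j) :
    insertProc z i = insertProc z' i := by
  induction i using Nat.strong_induction_on with
  | _ i ih =>
    rcases eq_or_ne i 0 with rfl | hi
    · simp [insertProc_zero]
    · rw [insertProc_eq z hi, insertProc_eq z' hi]
      have hfp : freeP z i = freeP z' i := by
        funext m
        have : ∀ j, j < i → insertProc z j = insertProc z' j := by
          intro j hj
          exact ih j hj (fun k h1 h2 => h k h1 (by omega))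
        simp only [freeP, eq_iff_iff]
        constructor
        · rintro ⟨h1, h2⟩; exact ⟨h1, fun j hj => (this j hj) ▸ h2 j hj⟩
        · rintro ⟨h1, h2⟩; exact ⟨h1, fun j hj => (this j hj) ▸ h2 j hj⟩
      rw [hfp, h i (by omega) le_rfl]

-- nth removal lemmas
lemma count_diff (p : ℕ → Prop) (e : ℕ) [DecidablePred p]
    [DecidablePred (fun m => p m ∧ m ≠ e)] (hpe : p e) (c : ℕ) :
    Nat.count (fun m => p m ∧ m ≠ e) c = Nat.count p c - (if e < c then 1 else 0) := by
  rw [Nat.count_eq_card_filter_range, Nat.count_eq_card_filter_range]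
  have hfe : (Finset.range c).filter (fun m => p m ∧ m ≠ e)
      = ((Finset.range c).filter p).erase e := by
    ext m
    simp only [Finset.mem_filter, Finset.mem_erase, Finset.mem_range]
    tauto
  rw [hfe]
  split_ifs with h
  · rw [Finset.card_erase_of_mem (by simp [Finset.mem_filter, h, hpe])]
  · rw [Finset.erase_eq_of_notMem (by simp only [Finset.mem_filter, Finset.mem_range]; tauto)]
    simp

lemma diff_infinite (p : ℕ → Prop) (hp : (setOf p).Infinite) (e : ℕ) :
    (setOf (fun m => p m ∧ m ≠ e)).Infinite := by
  have : setOf (fun m => p m ∧ m ≠ e) = setOf p \ {e} := by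
    ext m; show (p m ∧ m ≠ e) ↔ (p m ∧ m ∉ ({e} : Set ℕ)); simp
  rw [this]
  exact hp.diff (Set.finite_singleton e)

lemma nth_diff_lt (p : ℕ → Prop) (hp : (setOf p).Infinite) {s t : ℕ} (hts : t < s) :
    Nat.nth (fun m => p m ∧ m ≠ Nat.nth p s) t = Nat.nth p t := by
  classical
  set e := Nat.nth p s with he
  set c := Nat.nth p t with hc
  have hpc : p c := Nat.nth_mem_of_infinite hp t
  have hne : c ≠ e := fun h => absurd ((Nat.nth_injective hp) h) (by omega)
  have hcount : Nat.count (fun m => p m ∧ m ≠ e) c = t := by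
    rw [count_diff p e (Nat.nth_mem_of_infinite hp s) c]
    have : ¬ e < c := by
      have := (Nat.nth_strictMono hp).lt_iff_lt (a := t) (b := s)
      simp only [not_lt]
      exact (Nat.nth_strictMono hp).monotone (by omega)
    rw [if_neg this, Nat.count_nth_of_infinite hp]; omega
  calc Nat.nth (fun m => p m ∧ m ≠ e) t
      = Nat.nth (fun m => p m ∧ m ≠ e) (Nat.count (fun m => p m ∧ m ≠ e) c) := by rw [hcount]
    _ = c := Nat.nth_count ⟨hpc, hne⟩

lemma nth_diff_ge (p : ℕ → Prop) (hp : (setOf p).Infinite) {s t : ℕ} (hts : s ≤ t) :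
    Nat.nth (fun m => p m ∧ m ≠ Nat.nth p s) t = Nat.nth p (t + 1) := by
  classical
  set e := Nat.nth p s with he
  set c := Nat.nth p (t + 1) with hc
  have hpc : p c := Nat.nth_mem_of_infinite hp (t + 1)
  have hne : c ≠ e := fun h => absurd ((Nat.nth_injective hp) h) (by omega)
  have hcount : Nat.count (fun m => p m ∧ m ≠ e) c = t := by
    rw [count_diff p e (Nat.nth_mem_of_infinite hp s) c]
    have : e < c := (Nat.nth_strictMono hp) (by omega)
    rw [if_pos this, Nat.count_nth_of_infinite hp]; omega
  calc Nat.nth (fun m => p m ∧ m ≠ e) t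
      = Nat.nth (fun m => p m ∧ m ≠ e) (Nat.count (fun m => p m ∧ m ≠ e) c) := by rw [hcount]
    _ = c := Nat.nth_count ⟨hpc, hne⟩

lemma freeP_succ (z : ℕ → ℕ) (i : ℕ) :
    freeP z (i + 1) = fun m => freeP z i m ∧ m ≠ insertProc z i := by
  funext m
  simp only [freeP, eq_iff_iff]
  constructor
  · rintro ⟨h1, h2⟩
    exact ⟨⟨h1, fun j hj => h2 j (by omega)⟩, fun h => (h2 i (by omega)) h.symm⟩
  · rintro ⟨⟨h1, h2⟩, h3⟩
    refine ⟨h1, fun j hj => ?_⟩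
    rcases eq_or_ne j i with rfl | hne
    · exact fun h => h3 h.symm
    · exact h2 j (by omega)


end Mallows

namespace Mallows2
open Mallows

def swapSeq (z : ℕ → ℕ) (i : ℕ) : ℕ → ℕ :=
  fun k => if k = i then z (i + 1) + 1 else if k = i + 1 then z i else z k

variable {z : ℕ → ℕ} {i : ℕ}

lemma swap_before (hi : i ≠ 0) {k : ℕ} (hk : k < i) :
    insertProc (swapSeq z i) k = insertProc z k := by
  refine insertProc_congr (fun j h1 h2 => ?_)
  have hj1 : j ≠ i := by omega
  have hj2 : j ≠ i + 1 := by omega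
  simp [swapSeq, hj1, hj2]

lemma freeP_swap (hi : i ≠ 0) : freeP (swapSeq z i) i = freeP z i := by
  funext m
  simp only [freeP, eq_iff_iff]
  constructor
  · rintro ⟨h1, h2⟩
    exact ⟨h1, fun j hj => (swap_before hi hj) ▸ h2 j hj⟩
  · rintro ⟨h1, h2⟩
    exact ⟨h1, fun j hj => (swap_before hi hj).symm ▸ h2 j hj⟩

lemma swap_at_left (hi : i ≠ 0) (hz1 : 1 ≤ z i) (hz2 : 1 ≤ z (i + 1))
    (hasc : z i ≤ z (i + 1)) :
    insertProc (swapSeq z i) i = insertProc z (i + 1) := by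
  have hL : insertProc (swapSeq z i) i = Nat.nth (freeP z i) (z (i + 1)) := by
    rw [insertProc_eq _ hi, freeP_swap hi]
    have : swapSeq z i i = z (i + 1) + 1 := by simp [swapSeq]
    rw [this]
    norm_num
  have hR : insertProc z (i + 1) = Nat.nth (freeP z i) (z (i + 1)) := by
    rw [insertProc_eq _ ((by omega : i + 1 ≠ 0)), freeP_succ, insertProc_eq _ hi]
    rw [nth_diff_ge (freeP z i) (freeP_infinite z i) (by omega)]
    congr 1
    omega
  rw [hL, hR]

lemma swap_at_right (hi : i ≠ 0) (hz1 : 1 ≤ z i) (hz2 : 1 ≤ z (i + 1))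
    (hasc : z i ≤ z (i + 1)) :
    insertProc (swapSeq z i) (i + 1) = insertProc z i := by
  have hL : insertProc (swapSeq z i) i = Nat.nth (freeP z i) (z (i + 1)) := by
    rw [insertProc_eq _ hi, freeP_swap hi]
    have : swapSeq z i i = z (i + 1) + 1 := by simp [swapSeq]
    rw [this]; norm_num
  rw [insertProc_eq _ ((by omega : i + 1 ≠ 0)), freeP_succ]
  have h1 : swapSeq z i (i + 1) = z i := by simp [swapSeq]
  have h2 : freeP (swapSeq z i) i = freeP z i := freeP_swap hi
  rw [h1, h2, hL]
  rw [nth_diff_lt (freeP z i) (freeP_infinite z i) (by omega)]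
  rw [insertProc_eq _ hi]

lemma swap_after (hi : i ≠ 0) (hz1 : 1 ≤ z i) (hz2 : 1 ≤ z (i + 1))
    (hasc : z i ≤ z (i + 1)) :
    ∀ k, i + 2 ≤ k → insertProc (swapSeq z i) k = insertProc z k := by
  intro k
  induction k using Nat.strong_induction_on with
  | _ k ih =>
    intro hk
    have hk0 : k ≠ 0 := by omega
    rw [insertProc_eq _ hk0, insertProc_eq _ hk0]
    have hzk : swapSeq z i k = z k := by
      have : k ≠ i := by omega
      have h2 : k ≠ i + 1 := by omega
      simp [swapSeq, this, h2]
    have hfp : freeP (swapSeq z i) k = freeP z k := by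
      funext m
      simp only [freeP, eq_iff_iff]
      have key : ∀ m : ℕ, (∀ j, j < k → insertProc (swapSeq z i) j ≠ m) ↔
          (∀ j, j < k → insertProc z j ≠ m) := by
        intro m
        constructor
        · intro h j hj
          rcases eq_or_ne j i with rfl | hji
          · rw [← swap_at_right hi hz1 hz2 hasc]; exact h (j + 1) (by omega)
          rcases eq_or_ne j (i + 1) with rfl | hji1
          · rw [← swap_at_left hi hz1 hz2 hasc]; exact h i (by omega)
          rcases lt_or_ge j i with hlt | hge
          · rw [← swap_before hi hlt]; exact h j hj
          · rw [← ih j hj (by omega)]; exact h j hj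
        · intro h j hj
          rcases eq_or_ne j i with rfl | hji
          · rw [swap_at_left hi hz1 hz2 hasc]; exact h (j + 1) (by omega)
          rcases eq_or_ne j (i + 1) with rfl | hji1
          · rw [swap_at_right hi hz1 hz2 hasc]; exact h i (by omega)
          rcases lt_or_ge j i with hlt | hge
          · rw [swap_before hi hlt]; exact h j hj
          · rw [ih j hj (by omega)]; exact h j hj
      exact ⟨fun ⟨a, b⟩ => ⟨a, (key m).1 b⟩, fun ⟨a, b⟩ => ⟨a, (key m).2 b⟩⟩
    rw [hfp, hzk]

lemma lt_succ_iff_of_seq (hi : i ≠ 0) (hz1 : 1 ≤ z i) (hz2 : 1 ≤ z (i + 1)) :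
    (insertProc z i < insertProc z (i + 1) ↔ z i ≤ z (i + 1)) := by
  have hR : insertProc z (i + 1)
      = Nat.nth (fun m => freeP z i m ∧ m ≠ Nat.nth (freeP z i) (z i - 1)) (z (i + 1) - 1) := by
    rw [insertProc_eq _ ((by omega : i + 1 ≠ 0)), freeP_succ, insertProc_eq _ hi]
  have hL : insertProc z i = Nat.nth (freeP z i) (z i - 1) := insertProc_eq _ hi
  constructor
  · intro h
    by_contra hc
    push_neg at hc
    rw [hR, nth_diff_lt (freeP z i) (freeP_infinite z i) (by omega), hL] at h
    have := (Nat.nth_strictMono (freeP_infinite z i)).lt_iff_lt.mp h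
    omega
  · intro h
    rw [hR, nth_diff_ge (freeP z i) (freeP_infinite z i) (by omega), hL]
    exact (Nat.nth_strictMono (freeP_infinite z i)) (by omega)

end Mallows2

namespace Mallows3
open Mallows Mallows2

variable {n : ℕ}

def extSeq (n : ℕ) (v : Fin n → ℕ) : ℕ → ℕ :=
  fun j => if h : 1 ≤ j ∧ j ≤ n then v ⟨j - 1, by omega⟩ else 1

def aVal (v : Fin n → ℕ) (i : Fin n) : ℕ := insertProc (extSeq n v) ((i : ℕ) + 1)

def patF (v : Fin n → ℕ) (i : Fin n) : ℕ :=
  (Finset.univ.filter fun k : Fin n => aVal v k ≤ aVal v i).card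

lemma extSeq_apply (v : Fin n → ℕ) (i : Fin n) : extSeq n v ((i : ℕ) + 1) = v i := by
  have h : 1 ≤ (i : ℕ) + 1 ∧ (i : ℕ) + 1 ≤ n := ⟨by omega, i.isLt⟩
  simp only [extSeq, dif_pos h]
  exact congrArg v (Fin.ext (by simp))

lemma extSeq_one_le (v : Fin n → ℕ) (hv : ∀ i, 1 ≤ v i) (j : ℕ) : 1 ≤ extSeq n v j := by
  unfold extSeq
  split
  · exact hv _
  · omega

lemma aVal_injective (v : Fin n → ℕ) : Function.Injective (aVal v) := by
  intro i k h
  by_contra hne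
  exact insertProc_ne' (extSeq n v) (i := (i : ℕ) + 1) (j := (k : ℕ) + 1)
    (by simpa [Fin.val_injective.ne_iff] using fun hh : (i:ℕ) = (k:ℕ) => hne (Fin.ext hh))
    (by omega) (by omega) h

lemma patF_lt_of_aVal_lt {v : Fin n → ℕ} {i k : Fin n} (h : aVal v i < aVal v k) :
    patF v i < patF v k := by
  apply Finset.card_lt_card
  constructor
  · intro m hm
    simp only [Finset.mem_filter, Finset.mem_univ, true_and] at hm ⊢
    omega
  · intro hsub
    have := hsub (by simp : k ∈ Finset.univ.filter fun m => aVal v m ≤ aVal v k)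
    simp only [Finset.mem_filter, Finset.mem_univ, true_and] at this
    omega

lemma aVal_lt_of_patF_lt {v : Fin n → ℕ} {i k : Fin n} (h : patF v i < patF v k) :
    aVal v i < aVal v k := by
  rcases lt_trichotomy (aVal v i) (aVal v k) with hc | hc | hc
  · exact hc
  · exact absurd (aVal_injective v hc) (by rintro rfl; omega)
  · exact absurd (patF_lt_of_aVal_lt hc) (by omega)

lemma one_le_patF (v : Fin n → ℕ) (i : Fin n) : 1 ≤ patF v i := by
  have : i ∈ Finset.univ.filter fun k => aVal v k ≤ aVal v i := by simp
  have h2 := Finset.card_pos.mpr ⟨i, this⟩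
  unfold patF
  omega

lemma patF_le (v : Fin n → ℕ) (i : Fin n) : patF v i ≤ n := by
  unfold patF
  simpa using Finset.card_filter_le (Finset.univ : Finset (Fin n))
    (fun k => aVal v k ≤ aVal v i)

lemma exists_perm (v : Fin n → ℕ) : ∃ π : Equiv.Perm (Fin n), ∀ i, patF v i = (π i : ℕ) + 1 := by
  have hlt : ∀ i : Fin n, patF v i - 1 < n := by
    intro i; have := patF_le v i; have := one_le_patF v i; omega
  set g : Fin n → Fin n := fun i => ⟨patF v i - 1, hlt i⟩ with hg
  have hginj : Function.Injective g := by
    intro i k h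
    have h1 : patF v i = patF v k := by
      have := congrArg Fin.val h
      simp only [hg] at this
      have := one_le_patF v i; have := one_le_patF v k
      omega
    rcases lt_trichotomy (aVal v i) (aVal v k) with hc | hc | hc
    · exact absurd (patF_lt_of_aVal_lt hc) (by omega)
    · exact aVal_injective v hc
    · exact absurd (patF_lt_of_aVal_lt hc) (by omega)
  refine ⟨Equiv.ofBijective g (Finite.injective_iff_bijective.mp hginj), fun i => ?_⟩
  have : (Equiv.ofBijective g (Finite.injective_iff_bijective.mp hginj)) i = g i := rfl
  rw [this]
  simp only [hg]
  have := one_le_patF v i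
  omega

section Swap

variable {j : ℕ}

def jleft (j : ℕ) (hj : j + 1 < n) : Fin n := ⟨j, Nat.lt_of_succ_lt hj⟩
def jright (j : ℕ) (hj : j + 1 < n) : Fin n := ⟨j + 1, hj⟩

def PhiV (j : ℕ) (hj : j + 1 < n) (v : Fin n → ℕ) : Fin n → ℕ :=
  fun k => if k = jleft j hj then v (jright j hj) + 1
    else if k = jright j hj then v (jleft j hj) else v k

lemma extSeq_PhiV (j : ℕ) (hj : j + 1 < n) (v : Fin n → ℕ) :
    extSeq n (PhiV j hj v) = swapSeq (extSeq n v) (j + 1) := by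
  funext m
  rcases eq_or_ne m (j + 1) with rfl | h1
  · have hmn : 1 ≤ j + 1 ∧ j + 1 ≤ n := ⟨by omega, by omega⟩
    have hmn2 : 1 ≤ j + 1 + 1 ∧ j + 1 + 1 ≤ n := ⟨by omega, by omega⟩
    simp only [extSeq, swapSeq, dif_pos hmn, dif_pos hmn2, if_pos rfl]
    have he1 : (⟨j + 1 - 1, by omega⟩ : Fin n) = jleft j hj := Fin.ext (by simp [jleft])
    have he2 : (⟨j + 1 + 1 - 1, by omega⟩ : Fin n) = jright j hj := Fin.ext (by simp [jright])
    rw [he1, he2]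
    simp [PhiV]
  rcases eq_or_ne m (j + 2) with rfl | h2
  · have hmn : 1 ≤ j + 2 ∧ j + 2 ≤ n := ⟨by omega, by omega⟩
    have hmn1 : 1 ≤ j + 1 ∧ j + 1 ≤ n := ⟨by omega, by omega⟩
    have hne : j + 2 ≠ j + 1 := by omega
    simp only [extSeq, swapSeq, dif_pos hmn, dif_pos hmn1, if_neg hne]
    rw [if_pos trivial]
    have he1 : (⟨j + 2 - 1, by omega⟩ : Fin n) = jright j hj := Fin.ext (by simp [jright])
    have he2 : (⟨j + 1 - 1, by omega⟩ : Fin n) = jleft j hj := Fin.ext (by simp [jleft])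
    rw [he1, he2]
    have : jright j hj ≠ jleft j hj := by
      simp only [jright, jleft, ne_eq, Fin.mk.injEq]; omega
    simp [PhiV, this]
  · have hne2 : m ≠ j + 1 + 1 := by omega
    simp only [swapSeq, if_neg h1, if_neg hne2, extSeq]
    by_cases hm : 1 ≤ m ∧ m ≤ n
    · rw [dif_pos hm, dif_pos hm]
      have hne3 : (⟨m - 1, by omega⟩ : Fin n) ≠ jleft j hj := by
        simp only [jleft, ne_eq, Fin.mk.injEq]; omega
      have hne4 : (⟨m - 1, by omega⟩ : Fin n) ≠ jright j hj := by
        simp only [jright, ne_eq, Fin.mk.injEq]; omega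
      simp [PhiV, hne3, hne4]
    · rw [dif_neg hm, dif_neg hm]

lemma aVal_PhiV (j : ℕ) (hj : j + 1 < n) (v : Fin n → ℕ) (hv : ∀ i, 1 ≤ v i)
    (hasc : v (jleft j hj) ≤ v (jright j hj)) (k : Fin n) :
    aVal (PhiV j hj v) k = aVal v (Equiv.swap (jleft j hj) (jright j hj) k) := by
  have hz1 : 1 ≤ extSeq n v (j + 1) := extSeq_one_le v hv _
  have hz2 : 1 ≤ extSeq n v (j + 1 + 1) := extSeq_one_le v hv _
  have hasc' : extSeq n v (j + 1) ≤ extSeq n v (j + 1 + 1) := by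
    have e1 : extSeq n v (j + 1) = v (jleft j hj) := by
      have := extSeq_apply v (jleft j hj); simpa [jleft] using this
    have e2 : extSeq n v (j + 1 + 1) = v (jright j hj) := by
      have := extSeq_apply v (jright j hj); simpa [jright] using this
    rw [e1, e2]; exact hasc
  rcases eq_or_ne k (jleft j hj) with rfl | hk1
  · rw [Equiv.swap_apply_left]
    unfold aVal
    rw [extSeq_PhiV j hj v]
    have hkv : ((jleft j hj : Fin n) : ℕ) + 1 = j + 1 := by simp [jleft]
    have hkv2 : ((jright j hj : Fin n) : ℕ) + 1 = j + 1 + 1 := by simp [jright]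
    rw [hkv, hkv2]
    exact swap_at_left (by omega) hz1 hz2 hasc'
  rcases eq_or_ne k (jright j hj) with rfl | hk2
  · rw [Equiv.swap_apply_right]
    unfold aVal
    rw [extSeq_PhiV j hj v]
    have hkv : ((jright j hj : Fin n) : ℕ) + 1 = j + 1 + 1 := by simp [jright]
    have hkv2 : ((jleft j hj : Fin n) : ℕ) + 1 = j + 1 := by simp [jleft]
    rw [hkv, hkv2]
    exact swap_at_right (by omega) hz1 hz2 hasc'
  · rw [Equiv.swap_apply_of_ne_of_ne hk1 hk2]
    unfold aVal
    rw [extSeq_PhiV j hj v]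
    have hkl : (k : ℕ) ≠ j := fun h => hk1 (Fin.ext (by simpa [jleft] using h))
    have hkr : (k : ℕ) ≠ j + 1 := fun h => hk2 (Fin.ext (by simpa [jright] using h))
    rcases lt_or_ge (k : ℕ) j with hlt | hge
    · exact swap_before (by omega) (by omega)
    · exact swap_after (by omega) hz1 hz2 hasc' _ (by omega)

lemma patF_PhiV (j : ℕ) (hj : j + 1 < n) (v : Fin n → ℕ) (hv : ∀ i, 1 ≤ v i)
    (hasc : v (jleft j hj) ≤ v (jright j hj)) (i : Fin n) :
    patF (PhiV j hj v) i = patF v (Equiv.swap (jleft j hj) (jright j hj) i) := by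
  unfold patF
  apply Finset.card_bij (fun k _ => Equiv.swap (jleft j hj) (jright j hj) k)
  · intro k hk
    simp only [Finset.mem_filter, Finset.mem_univ, true_and] at hk ⊢
    rwa [aVal_PhiV j hj v hv hasc, aVal_PhiV j hj v hv hasc] at hk
  · intro a _ b _ h
    exact (Equiv.swap _ _).injective h
  · intro b hb
    refine ⟨Equiv.swap (jleft j hj) (jright j hj) b, ?_, by simp⟩
    simp only [Finset.mem_filter, Finset.mem_univ, true_and] at hb ⊢
    rwa [aVal_PhiV j hj v hv hasc, aVal_PhiV j hj v hv hasc, Equiv.swap_apply_self]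

lemma aVal_adjacent_iff (j : ℕ) (hj : j + 1 < n) (v : Fin n → ℕ) (hv : ∀ i, 1 ≤ v i) :
    (aVal v (jleft j hj) < aVal v (jright j hj) ↔ v (jleft j hj) ≤ v (jright j hj)) := by
  have e1 : extSeq n v (j + 1) = v (jleft j hj) := by
    have := extSeq_apply v (jleft j hj); simpa [jleft] using this
  have e2 : extSeq n v (j + 1 + 1) = v (jright j hj) := by
    have := extSeq_apply v (jright j hj); simpa [jright] using this
  have := lt_succ_iff_of_seq (z := extSeq n v) (i := j + 1) (by omega)
    (by rw [e1]; exact hv _) (by rw [e2]; exact hv _)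
  unfold aVal
  have hkv : ((jleft j hj : Fin n) : ℕ) + 1 = j + 1 := by simp [jleft]
  have hkv2 : ((jright j hj : Fin n) : ℕ) + 1 = j + 1 + 1 := by simp [jright]
  rw [hkv, hkv2, this, e1, e2]

end Swap

end Mallows3


namespace Mallows4
open Mallows Mallows2 Mallows3

variable {n : ℕ}

lemma invCount_one : invCount (1 : Equiv.Perm (Fin n)) = 0 := by
  unfold invCount
  rw [Finset.card_eq_zero, Finset.filter_eq_empty_iff]
  intro p _
  simp only [Equiv.Perm.one_apply, not_and]
  intro h
  exact not_lt_of_gt h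

lemma swap_val (j : ℕ) (hj : j + 1 < n) (x : Fin n) :
    ((Equiv.swap (jleft j hj) (jright j hj)) x : ℕ)
      = if (x : ℕ) = j then j + 1 else if (x : ℕ) = j + 1 then j else (x : ℕ) := by
  rcases eq_or_ne x (jleft j hj) with rfl | h1
  · rw [Equiv.swap_apply_left]
    simp [jleft, jright]
  rcases eq_or_ne x (jright j hj) with rfl | h2
  · rw [Equiv.swap_apply_right]
    have : (j : ℕ) + 1 ≠ j := by omega
    simp [jleft, jright, this]
  · rw [Equiv.swap_apply_of_ne_of_ne h1 h2]
    have hx1 : (x : ℕ) ≠ j := fun h => h1 (Fin.ext (by simpa [jleft] using h))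
    have hx2 : (x : ℕ) ≠ j + 1 := fun h => h2 (Fin.ext (by simpa [jright] using h))
    simp [hx1, hx2]

lemma swap_preserves_lt (j : ℕ) (hj : j + 1 < n) {p : Fin n × Fin n}
    (hp : ¬((p.1 : ℕ) = j ∧ (p.2 : ℕ) = j + 1)) (h : p.1 < p.2) :
    Equiv.swap (jleft j hj) (jright j hj) p.1 < Equiv.swap (jleft j hj) (jright j hj) p.2 := by
  rw [Fin.lt_def] at h ⊢
  rw [swap_val j hj, swap_val j hj]
  split_ifs <;> omega

lemma invCount_mul_swap (j : ℕ) (hj : j + 1 < n) (π : Equiv.Perm (Fin n))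
    (h : π (jleft j hj) < π (jright j hj)) :
    invCount (π * Equiv.swap (jleft j hj) (jright j hj)) = invCount π + 1 := by
  classical
  set τ := Equiv.swap (jleft j hj) (jright j hj) with hτ
  set pr : Fin n × Fin n := (jleft j hj, jright j hj) with hpr
  have hjlr : jleft j hj < jright j hj := by
    rw [Fin.lt_def]; simp [jleft, jright]
  have hmem : pr ∈ Finset.univ.filter
      fun p : Fin n × Fin n => p.1 < p.2 ∧ (π * τ) p.2 < (π * τ) p.1 := by
    simp only [Finset.mem_filter, Finset.mem_univ, true_and, hpr]
    refine ⟨hjlr, ?_⟩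
    simp only [Equiv.Perm.mul_apply, hτ, Equiv.swap_apply_left, Equiv.swap_apply_right]
    exact h
  have hnmem : pr ∉ Finset.univ.filter
      fun p : Fin n × Fin n => p.1 < p.2 ∧ π p.2 < π p.1 := by
    simp only [Finset.mem_filter, Finset.mem_univ, true_and, hpr, not_and]
    intro _
    exact not_lt_of_gt h
  have hne_pr : ∀ {p : Fin n × Fin n}, p.1 < p.2 → p ≠ pr →
      ¬((p.1 : ℕ) = j ∧ (p.2 : ℕ) = j + 1) := by
    intro p _ hne hc
    exact hne (Prod.ext (Fin.ext (by simpa [jleft, hpr] using hc.1))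
      (Fin.ext (by simpa [jright, hpr] using hc.2)))
  unfold invCount
  rw [← Finset.card_erase_add_one hmem]
  congr 1
  apply Finset.card_bij (fun p _ => (τ p.1, τ p.2))
  · intro p hp
    simp only [Finset.mem_erase, Finset.mem_filter, Finset.mem_univ, true_and] at hp
    obtain ⟨hne, h1, h2⟩ := hp
    simp only [Finset.mem_filter, Finset.mem_univ, true_and]
    constructor
    · exact swap_preserves_lt j hj (hne_pr h1 hne) h1
    · simpa [Equiv.Perm.mul_apply] using h2
  · intro a ha b hb hab
    simp only [Prod.mk.injEq] at hab
    exact Prod.ext (τ.injective hab.1) (τ.injective hab.2)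
  · intro b hb
    simp only [Finset.mem_filter, Finset.mem_univ, true_and] at hb
    obtain ⟨hb1, hb2⟩ := hb
    have hbne : b ≠ pr := by
      rintro rfl
      exact hnmem (by simp [Finset.mem_filter, hb1, hb2])
    refine ⟨(τ b.1, τ b.2), ?_, ?_⟩
    · simp only [Finset.mem_erase, Finset.mem_filter, Finset.mem_univ, true_and]
      refine ⟨?_, swap_preserves_lt j hj (hne_pr hb1 hbne) hb1, ?_⟩
      · rintro hc
        rw [Prod.ext_iff] at hc
        have h1 : b.1 = jright j hj := by
          have h1' := congrArg τ hc.1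
          simpa [hτ, Equiv.swap_apply_self, Equiv.swap_apply_left, hpr] using h1'
        have h2 : b.2 = jleft j hj := by
          have h2' := congrArg τ hc.2
          simpa [hτ, Equiv.swap_apply_self, Equiv.swap_apply_right, hpr] using h2'
        rw [h1, h2] at hb1
        exact absurd hjlr (not_lt_of_gt hb1)
      · simp only [Equiv.Perm.mul_apply, hτ, Equiv.swap_apply_self]
        exact hb2
    · simp [hτ, Equiv.swap_apply_self]

lemma perm_eq_one_of_strictMono {π : Equiv.Perm (Fin n)}
    (h : StrictMono (π : Fin n → Fin n)) : π = 1 := by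
  haveI : WellFoundedLT (Fin n) := inferInstance
  have hinv : StrictMono (π⁻¹ : Equiv.Perm (Fin n)) := by
    intro a b hab
    by_contra hc
    push_neg at hc
    have := h.le_iff_le.mpr hc
    simp only [Equiv.Perm.coe_inv, Equiv.apply_symm_apply] at this
    exact absurd hab (not_lt_of_ge this)
  have key : ∀ i, π i = i := by
    intro i
    have h1 : i ≤ π i := h.le_apply
    have h2 : π i ≤ π⁻¹ (π i) := hinv.le_apply
    simp only [Equiv.Perm.coe_inv, Equiv.symm_apply_apply] at h2
    exact le_antisymm h2 h1
  ext i
  simp [key]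

lemma exists_descent {π : Equiv.Perm (Fin n)} (hπ : π ≠ 1) :
    ∃ (j : ℕ) (hj : j + 1 < n), π (jright j hj) < π (jleft j hj) := by
  by_contra hc
  push_neg at hc
  apply hπ
  apply perm_eq_one_of_strictMono
  rcases n with _ | m
  · intro a; exact absurd a.isLt (by omega)
  · rw [Fin.strictMono_iff_lt_succ]
    intro i
    have hj : (i : ℕ) + 1 < m + 1 := by omega
    have h1 : i.castSucc = jleft (i : ℕ) hj := Fin.ext (by simp [jleft])
    have h2 : i.succ = jright (i : ℕ) hj := Fin.ext (by simp [jright])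
    rw [h1, h2]
    have hle := hc (i : ℕ) hj
    rcases lt_or_eq_of_le hle with hlt | heq
    · exact hlt
    · exact absurd (π.injective heq) (by
        simp only [jleft, jright, ne_eq, Fin.mk.injEq]
        omega)

end Mallows4

namespace Mallows5
open Mallows Mallows2 Mallows3 Mallows4

variable {n : ℕ}

def W (q : ℝ) {n : ℕ} (v : Fin n → ℕ) : ENNReal :=
  ∏ i, ENNReal.ofReal ((1 - q) * q ^ (v i - 1))

def Vset (n : ℕ) (π : Equiv.Perm (Fin n)) : Set (Fin n → ℕ) :=
  {v | (∀ i, 1 ≤ v i) ∧ ∀ i, patF v i = (π i : ℕ) + 1}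

noncomputable def F (q : ℝ) {n : ℕ} (π : Equiv.Perm (Fin n)) : ENNReal :=
  ∑' v : Vset n π, W q (v : Fin n → ℕ)

lemma jlr_ne (j : ℕ) (hj : j + 1 < n) : jleft j hj ≠ jright j hj := by
  simp only [jleft, jright, ne_eq, Fin.mk.injEq]
  omega

lemma PhiV_jleft (j : ℕ) (hj : j + 1 < n) (v : Fin n → ℕ) :
    PhiV j hj v (jleft j hj) = v (jright j hj) + 1 := by simp [PhiV]

lemma PhiV_jright (j : ℕ) (hj : j + 1 < n) (v : Fin n → ℕ) :
    PhiV j hj v (jright j hj) = v (jleft j hj) := by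
  simp [PhiV, (jlr_ne j hj).symm]

lemma PhiV_other (j : ℕ) (hj : j + 1 < n) (v : Fin n → ℕ) {k : Fin n}
    (h1 : k ≠ jleft j hj) (h2 : k ≠ jright j hj) : PhiV j hj v k = v k := by
  simp [PhiV, h1, h2]

lemma W_PhiV (q : ℝ) (hq0 : 0 ≤ q) (j : ℕ) (hj : j + 1 < n) (v : Fin n → ℕ)
    (hv : ∀ i, 1 ≤ v i) :
    W q (PhiV j hj v) = ENNReal.ofReal q * W q v := by
  classical
  set f : ℕ → ENNReal := fun m => ENNReal.ofReal ((1 - q) * q ^ (m - 1)) with hf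
  have key : ∀ w : Fin n → ℕ, W q w
      = f (w (jleft j hj)) * (f (w (jright j hj)) *
        ∏ k ∈ (Finset.univ.erase (jleft j hj)).erase (jright j hj), f (w k)) := by
    intro w
    rw [W]
    rw [← Finset.mul_prod_erase Finset.univ (fun k => f (w k)) (Finset.mem_univ (jleft j hj))]
    congr 1
    rw [← Finset.mul_prod_erase (Finset.univ.erase (jleft j hj)) (fun k => f (w k))
      (Finset.mem_erase.mpr ⟨(jlr_ne j hj).symm, Finset.mem_univ _⟩)]
  rw [key, key]
  have hrest : ∏ k ∈ (Finset.univ.erase (jleft j hj)).erase (jright j hj), f (PhiV j hj v k)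
      = ∏ k ∈ (Finset.univ.erase (jleft j hj)).erase (jright j hj), f (v k) := by
    refine Finset.prod_congr rfl (fun k hk => ?_)
    simp only [Finset.mem_erase] at hk
    rw [PhiV_other j hj v hk.2.1 hk.1]
  rw [hrest, PhiV_jleft, PhiV_jright]
  have hfq : f (v (jright j hj) + 1) = ENNReal.ofReal q * f (v (jright j hj)) := by
    simp only [hf]
    rw [← ENNReal.ofReal_mul hq0]
    congr 1
    have h1 : 1 ≤ v (jright j hj) := hv _
    have : v (jright j hj) + 1 - 1 = (v (jright j hj) - 1) + 1 := by omega
    rw [this, pow_succ]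
    ring
  rw [hfq]
  ring

lemma mem_Vset_iff (π : Equiv.Perm (Fin n)) (v : Fin n → ℕ) :
    v ∈ Vset n π ↔ (∀ i, 1 ≤ v i) ∧ ∀ i, patF v i = (π i : ℕ) + 1 := Iff.rfl

lemma Vset_asc {π : Equiv.Perm (Fin n)} {j : ℕ} {hj : j + 1 < n}
    (hasc : π (jleft j hj) < π (jright j hj)) {v : Fin n → ℕ} (hv : v ∈ Vset n π) :
    v (jleft j hj) ≤ v (jright j hj) := by
  obtain ⟨hv1, hv2⟩ := hv
  have hr : patF v (jleft j hj) < patF v (jright j hj) := by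
    rw [hv2, hv2]
    have := Fin.lt_def.mp hasc
    omega
  exact (aVal_adjacent_iff j hj v hv1).mp (aVal_lt_of_patF_lt hr)

def PsiV (j : ℕ) (hj : j + 1 < n) (v : Fin n → ℕ) : Fin n → ℕ :=
  fun k => if k = jleft j hj then v (jright j hj)
    else if k = jright j hj then v (jleft j hj) - 1 else v k

lemma PhiV_PsiV (j : ℕ) (hj : j + 1 < n) (v : Fin n → ℕ)
    (h : v (jright j hj) + 1 ≤ v (jleft j hj)) : PhiV j hj (PsiV j hj v) = v := by
  funext k
  rcases eq_or_ne k (jleft j hj) with rfl | h1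
  · rw [PhiV_jleft]
    simp only [PsiV, if_neg (jlr_ne j hj).symm, eq_self_iff_true, if_true]
    omega
  rcases eq_or_ne k (jright j hj) with rfl | h2
  · rw [PhiV_jright]
    simp [PsiV]
  · rw [PhiV_other j hj _ h1 h2]
    simp [PsiV, h1, h2]

lemma PsiV_PhiV (j : ℕ) (hj : j + 1 < n) (v : Fin n → ℕ) : PsiV j hj (PhiV j hj v) = v := by
  funext k
  rcases eq_or_ne k (jleft j hj) with rfl | h1
  · simp only [PsiV, eq_self_iff_true, if_true]
    rw [PhiV_jright]
  rcases eq_or_ne k (jright j hj) with rfl | h2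
  · simp only [PsiV, if_neg (jlr_ne j hj).symm, eq_self_iff_true, if_true]
    rw [PhiV_jleft]
    omega
  · simp only [PsiV, if_neg h1, if_neg h2]
    rw [PhiV_other j hj _ h1 h2]

lemma Vset_desc {π : Equiv.Perm (Fin n)} {j : ℕ} {hj : j + 1 < n}
    (hasc : π (jleft j hj) < π (jright j hj)) {v : Fin n → ℕ}
    (hv : v ∈ Vset n (π * Equiv.swap (jleft j hj) (jright j hj))) :
    v (jright j hj) + 1 ≤ v (jleft j hj) := by
  obtain ⟨hv1, hv2⟩ := hv
  have hr : patF v (jright j hj) < patF v (jleft j hj) := by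
    rw [hv2, hv2]
    simp only [Equiv.Perm.mul_apply, Equiv.swap_apply_left, Equiv.swap_apply_right]
    have := Fin.lt_def.mp hasc
    omega
  have haVal := aVal_lt_of_patF_lt hr
  by_contra hc
  push_neg at hc
  have : v (jleft j hj) ≤ v (jright j hj) := by omega
  have := (aVal_adjacent_iff j hj v hv1).mpr this
  omega

lemma PhiV_mem {π : Equiv.Perm (Fin n)} {j : ℕ} {hj : j + 1 < n}
    (hasc : π (jleft j hj) < π (jright j hj)) {v : Fin n → ℕ} (hv : v ∈ Vset n π) :
    PhiV j hj v ∈ Vset n (π * Equiv.swap (jleft j hj) (jright j hj)) := by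
  obtain ⟨hv1, hv2⟩ := hv
  constructor
  · intro i
    rcases eq_or_ne i (jleft j hj) with rfl | h1
    · rw [PhiV_jleft]; omega
    rcases eq_or_ne i (jright j hj) with rfl | h2
    · rw [PhiV_jright]; exact hv1 _
    · rw [PhiV_other j hj _ h1 h2]; exact hv1 _
  · intro i
    rw [patF_PhiV j hj v hv1 (Vset_asc hasc ⟨hv1, hv2⟩), hv2, Equiv.Perm.mul_apply]

lemma PsiV_mem {π : Equiv.Perm (Fin n)} {j : ℕ} {hj : j + 1 < n}
    (hasc : π (jleft j hj) < π (jright j hj)) {v : Fin n → ℕ}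
    (hv : v ∈ Vset n (π * Equiv.swap (jleft j hj) (jright j hj))) :
    PsiV j hj v ∈ Vset n π := by
  have hdesc := Vset_desc hasc hv
  obtain ⟨hv1, hv2⟩ := hv
  have hpos : ∀ i, 1 ≤ PsiV j hj v i := by
    intro i
    rcases eq_or_ne i (jleft j hj) with rfl | h1
    · simp only [PsiV, eq_self_iff_true, if_true]; exact hv1 _
    rcases eq_or_ne i (jright j hj) with rfl | h2
    · simp only [PsiV, if_neg (jlr_ne j hj).symm, eq_self_iff_true, if_true]
      have := hv1 (jright j hj)
      omega
    · simp only [PsiV, if_neg h1, if_neg h2]; exact hv1 _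
  have hasc' : PsiV j hj v (jleft j hj) ≤ PsiV j hj v (jright j hj) := by
    simp only [PsiV, eq_self_iff_true, if_true, if_neg (jlr_ne j hj).symm]
    omega
  refine ⟨hpos, fun i => ?_⟩
  have hpat := patF_PhiV j hj (PsiV j hj v) hpos hasc'
  rw [PhiV_PsiV j hj v hdesc] at hpat
  have := hpat (Equiv.swap (jleft j hj) (jright j hj) i)
  rw [Equiv.swap_apply_self] at this
  rw [← this, hv2, Equiv.Perm.mul_apply, Equiv.swap_apply_self]

noncomputable def swapEquiv (π : Equiv.Perm (Fin n)) (j : ℕ) (hj : j + 1 < n)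
    (hasc : π (jleft j hj) < π (jright j hj)) :
    Vset n π ≃ Vset n (π * Equiv.swap (jleft j hj) (jright j hj)) where
  toFun v := ⟨PhiV j hj v, PhiV_mem hasc v.2⟩
  invFun v := ⟨PsiV j hj v, PsiV_mem hasc v.2⟩
  left_inv v := Subtype.ext (PsiV_PhiV j hj v)
  right_inv v := Subtype.ext (PhiV_PsiV j hj v (Vset_desc hasc v.2))

lemma F_swap (q : ℝ) (hq0 : 0 ≤ q) (π : Equiv.Perm (Fin n)) (j : ℕ) (hj : j + 1 < n)
    (hasc : π (jleft j hj) < π (jright j hj)) :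
    F q (π * Equiv.swap (jleft j hj) (jright j hj)) = ENNReal.ofReal q * F q π := by
  rw [F, ← Equiv.tsum_eq (swapEquiv π j hj hasc)]
  rw [F, ← ENNReal.tsum_mul_left]
  refine tsum_congr (fun v => ?_)
  exact W_PhiV q hq0 j hj (v : Fin n → ℕ) v.2.1

lemma F_eq_aux (q : ℝ) (hq0 : 0 ≤ q) :
    ∀ N (π : Equiv.Perm (Fin n)), invCount π = N →
      F q π = ENNReal.ofReal (q ^ invCount π) * F q (1 : Equiv.Perm (Fin n)) := by
  intro N
  induction N using Nat.strong_induction_on with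
  | _ N ih =>
    intro π hN
    rcases eq_or_ne π 1 with rfl | hπ
    · rw [invCount_one]
      simp
    · obtain ⟨j, hj, hdesc⟩ := exists_descent hπ
      set τ := Equiv.swap (jleft j hj) (jright j hj) with hτ
      set σ := π * τ with hσ
      have hστ : σ * τ = π := by
        rw [hσ, mul_assoc, hτ, Equiv.swap_mul_self, mul_one]
      have hσasc : σ (jleft j hj) < σ (jright j hj) := by
        rw [hσ]
        simp only [Equiv.Perm.mul_apply, hτ, Equiv.swap_apply_left, Equiv.swap_apply_right]
        exact hdesc
      have hinv : invCount π = invCount σ + 1 := by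
        rw [← hστ]
        exact invCount_mul_swap j hj σ hσasc
      have hFπ : F q π = ENNReal.ofReal q * F q σ := by
        rw [← hστ]
        exact F_swap q hq0 σ j hj hσasc
      have hIH := ih (invCount σ) (by omega) σ rfl
      rw [hFπ, hIH, ← mul_assoc, ← ENNReal.ofReal_mul hq0, hinv]
      congr 2
      rw [pow_succ]
      ring

lemma F_eq (q : ℝ) (hq0 : 0 ≤ q) (π : Equiv.Perm (Fin n)) :
    F q π = ENNReal.ofReal (q ^ invCount π) * F q (1 : Equiv.Perm (Fin n)) :=
  F_eq_aux q hq0 (invCount π) π rfl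

end Mallows5

/-- **The permutation induced on `{1,...,n}` by the infinite Mallows(q) process is
Mallows(q) distributed.** Here `(Z_i)_{i ≥ 1}` are i.i.d. Geometric(1-q) random
variables, `Π̃ = insertProc (Z · ω)`, and the induced permutation is given by the
rank function `Π_n(i) = #{k ∈ {1,...,n} : Π̃(k) ≤ Π̃(i)}`; identifying `Fin n` with
`{1,...,n}` via `i ↦ i+1`, for every `π : Equiv.Perm (Fin n)` the probability that
the induced permutation equals `π` is `q^{inv(π)}/Z_{n,q}`. -/
theorem induced_perm_is_mallows
    {Ω : Type*} [MeasurableSpace Ω] (P : Measure Ω) [IsProbabilityMeasure P]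
    (q : ℝ) (hq0 : 0 < q) (hq1 : q < 1)
    (Z : ℕ → Ω → ℕ)
    (hmeas : ∀ i, Measurable (Z i))
    (hindep : ProbabilityTheory.iIndepFun Z P)
    (hpos : ∀ i ω, 1 ≤ Z i ω)
    (hgeom : ∀ i k, 1 ≤ k →
      P {ω | Z i ω = k} = ENNReal.ofReal ((1 - q) * q ^ (k - 1)))
    (n : ℕ) (π : Equiv.Perm (Fin n)) :
    P {ω | ∀ i : Fin n,
        ((Finset.univ : Finset (Fin n)).filter
          (fun k : Fin n =>
            insertProc (fun j => Z j ω) ((k : ℕ) + 1)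
              ≤ insertProc (fun j => Z j ω) ((i : ℕ) + 1))).card
          = (π i : ℕ) + 1}
      = ENNReal.ofReal (q ^ invCount π / mallowsZ n q) := by
  classical
  open Mallows Mallows2 Mallows3 Mallows4 Mallows5 in
  -- basic notation
  set Eset : Equiv.Perm (Fin n) → Set Ω := fun σ => {ω | ∀ i : Fin n,
        ((Finset.univ : Finset (Fin n)).filter
          (fun k : Fin n =>
            insertProc (fun j => Z j ω) ((k : ℕ) + 1)
              ≤ insertProc (fun j => Z j ω) ((i : ℕ) + 1))).card
          = (σ i : ℕ) + 1} with hEsetDef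
  set Cyl : (Fin n → ℕ) → Set Ω := fun v => {ω | ∀ i : Fin n, Z ((i : ℕ) + 1) ω = v i}
    with hCylDef
  set v0 : Ω → (Fin n → ℕ) := fun ω i => Z ((i : ℕ) + 1) ω with hv0Def
  have hbridge : ∀ (ω : Ω) (i : Fin n),
      insertProc (fun j => Z j ω) ((i : ℕ) + 1) = Mallows3.aVal (v0 ω) i := by
    intro ω i
    unfold Mallows3.aVal
    refine (Mallows.insertProc_congr (fun j h1 h2 => ?_)).symm
    have hcond : 1 ≤ j ∧ j ≤ n := ⟨h1, by have := i.isLt; omega⟩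
    simp only [Mallows3.extSeq, dif_pos hcond, hv0Def]
    congr 1
    omega
  have hrank : ∀ (ω : Ω) (i : Fin n),
      ((Finset.univ : Finset (Fin n)).filter
          (fun k : Fin n =>
            insertProc (fun j => Z j ω) ((k : ℕ) + 1)
              ≤ insertProc (fun j => Z j ω) ((i : ℕ) + 1))).card
        = Mallows3.patF (v0 ω) i := by
    intro ω i
    unfold Mallows3.patF
    congr 1
    refine Finset.filter_congr (fun k _ => ?_)
    rw [hbridge ω k, hbridge ω i]
  have hEset_eq : ∀ σ : Equiv.Perm (Fin n),
      Eset σ = ⋃ v : Mallows5.Vset n σ, Cyl (v : Fin n → ℕ) := by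
    intro σ
    ext ω
    simp only [hEsetDef, Set.mem_setOf_eq, Set.mem_iUnion]
    constructor
    · intro hω
      refine ⟨⟨v0 ω, ⟨fun i => hpos _ _, fun i => ?_⟩⟩, fun i => rfl⟩
      rw [← hrank ω i]
      exact hω i
    · rintro ⟨⟨v, hv1, hv2⟩, hcyl⟩
      have hveq : v = v0 ω := funext fun i => (hcyl i).symm
      intro i
      rw [hrank ω i, ← hveq]
      exact hv2 i
  have hCylMeas : ∀ v : Fin n → ℕ, MeasurableSet (Cyl v) := by
    intro v
    have : Cyl v = ⋂ i : Fin n, (Z ((i : ℕ) + 1)) ⁻¹' {v i} := by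
      ext ω
      simp [hCylDef, Set.mem_iInter]
    rw [this]
    exact MeasurableSet.iInter fun i => (hmeas _) (measurableSet_singleton _)
  have hCylDisj : ∀ σ : Equiv.Perm (Fin n),
      Pairwise (Function.onFun Disjoint fun v : Mallows5.Vset n σ => Cyl (v : Fin n → ℕ)) := by
    intro σ v w hvw
    rw [Function.onFun, Set.disjoint_left]
    intro ω h1 h2
    apply hvw
    apply Subtype.ext
    funext i
    exact (h1 i).symm.trans (h2 i)
  have hPCyl : ∀ v : Fin n → ℕ, (∀ i, 1 ≤ v i) → P (Cyl v) = Mallows5.W q v := by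
    intro v hv
    have hiI := hindep.measure_inter_preimage_eq_mul
      (S := Finset.image (fun i : Fin n => (i : ℕ) + 1) Finset.univ)
      (sets := fun j => {Mallows3.extSeq n v j})
      (fun i _ => measurableSet_singleton _)
    have hset : (⋂ j ∈ Finset.image (fun i : Fin n => (i : ℕ) + 1) Finset.univ,
        Z j ⁻¹' {Mallows3.extSeq n v j}) = Cyl v := by
      ext ω
      simp only [Set.mem_iInter, Finset.mem_image, Finset.mem_univ, true_and,
        Set.mem_preimage, Set.mem_singleton_iff, hCylDef, Set.mem_setOf_eq]
      constructor
      · intro h i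
        have := h ((i : ℕ) + 1) ⟨i, rfl⟩
        rwa [Mallows3.extSeq_apply] at this
      · rintro h j ⟨i, rfl⟩
        rw [Mallows3.extSeq_apply]
        exact h i
    rw [hset] at hiI
    rw [hiI, Finset.prod_image (fun a _ b _ h => Fin.ext (by omega))]
    unfold Mallows5.W
    refine Finset.prod_congr rfl fun i _ => ?_
    have hpre : Z ((i : ℕ) + 1) ⁻¹' {Mallows3.extSeq n v ((i : ℕ) + 1)}
        = {ω | Z ((i : ℕ) + 1) ω = v i} := by
      rw [Mallows3.extSeq_apply]
      rfl
    rw [hpre, hgeom _ _ (hv i)]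
  have hPE : ∀ σ : Equiv.Perm (Fin n), P (Eset σ) = Mallows5.F q σ := by
    intro σ
    rw [hEset_eq σ, measure_iUnion (hCylDisj σ) (fun v => hCylMeas _)]
    exact tsum_congr fun v => hPCyl _ v.2.1
  have hEmeas : ∀ σ : Equiv.Perm (Fin n), MeasurableSet (Eset σ) := by
    intro σ
    rw [hEset_eq σ]
    exact MeasurableSet.iUnion fun v => hCylMeas _
  have hcover : (⋃ σ : Equiv.Perm (Fin n), Eset σ) = Set.univ := by
    ext ω
    simp only [Set.mem_iUnion, Set.mem_univ, iff_true]
    obtain ⟨σ, hσ⟩ := Mallows3.exists_perm (v0 ω)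
    exact ⟨σ, fun i => (hrank ω i).trans (hσ i)⟩
  have hEdisj : Pairwise (Function.onFun Disjoint Eset) := by
    intro σ1 σ2 hne
    rw [Function.onFun, Set.disjoint_left]
    intro ω h1 h2
    apply hne
    apply Equiv.ext
    intro i
    have := (h1 i).symm.trans (h2 i)
    exact Fin.ext (by omega)
  have hsum : ∑ σ : Equiv.Perm (Fin n), P (Eset σ) = 1 := by
    have hU := measure_iUnion (μ := P) hEdisj hEmeas
    rw [hcover, measure_univ] at hU
    rw [tsum_fintype] at hU
    exact hU.symm
  have hZpos : 0 < mallowsZ n q := by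
    refine Finset.sum_pos (fun σ _ => pow_pos hq0 _) ⟨1, Finset.mem_univ 1⟩
  have hkey : ENNReal.ofReal (mallowsZ n q) * Mallows5.F q (1 : Equiv.Perm (Fin n)) = 1 := by
    have hterm : ∀ σ : Equiv.Perm (Fin n),
        P (Eset σ) = ENNReal.ofReal (q ^ invCount σ) * Mallows5.F q (1 : Equiv.Perm (Fin n)) :=
      fun σ => (hPE σ).trans (Mallows5.F_eq q hq0.le σ)
    calc ENNReal.ofReal (mallowsZ n q) * Mallows5.F q (1 : Equiv.Perm (Fin n))
        = (∑ σ : Equiv.Perm (Fin n), ENNReal.ofReal (q ^ invCount σ))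
            * Mallows5.F q (1 : Equiv.Perm (Fin n)) := by
          rw [mallowsZ, ENNReal.ofReal_sum_of_nonneg (fun σ _ => pow_nonneg hq0.le _)]
      _ = ∑ σ : Equiv.Perm (Fin n),
            ENNReal.ofReal (q ^ invCount σ) * Mallows5.F q (1 : Equiv.Perm (Fin n)) :=
          Finset.sum_mul _ _ _
      _ = ∑ σ : Equiv.Perm (Fin n), P (Eset σ) := by
          exact Finset.sum_congr rfl fun σ _ => (hterm σ).symm
      _ = 1 := hsum
  have hA0 : ENNReal.ofReal (mallowsZ n q) ≠ 0 := by
    simp only [ne_eq, ENNReal.ofReal_eq_zero, not_le]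
    exact hZpos
  have hAtop : ENNReal.ofReal (mallowsZ n q) ≠ ⊤ := ENNReal.ofReal_ne_top
  have hF1 : Mallows5.F q (1 : Equiv.Perm (Fin n)) = (ENNReal.ofReal (mallowsZ n q))⁻¹ := by
    calc Mallows5.F q (1 : Equiv.Perm (Fin n))
        = (ENNReal.ofReal (mallowsZ n q))⁻¹
            * (ENNReal.ofReal (mallowsZ n q) * Mallows5.F q (1 : Equiv.Perm (Fin n))) := by
          rw [← mul_assoc, ENNReal.inv_mul_cancel hA0 hAtop, one_mul]
      _ = (ENNReal.ofReal (mallowsZ n q))⁻¹ := by rw [hkey, mul_one]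
  show P (Eset π) = _
  rw [hPE π, Mallows5.F_eq q hq0.le π, hF1, ENNReal.ofReal_div_of_pos hZpos,
    div_eq_mul_inv]

end
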